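/- (Monotone increasing norm in phase I) Let 0 < η < 1/β and let the plain gradient-descent iterates be defined by z_{t+1} = z_t − η(Hz_t + g) from the initialization z₀ = −α·g/‖g‖₂ where g ≠ 0, 0 < α < 1, and α·|gᵀHg| < ‖g‖₂³. Then for every t ≥ 0 one has z_tᵀ(Hz_t + g) ≤ 0, and consequently ‖z_{t+1}‖₂ ≥ ‖z_t‖₂, i.e. the norms of the iterates are monotone nondecreasing. -/

import Mathlib

open Matrix

/-- The Euclidean (`ℓ₂`) norm of a vector in `ℝⁿ`. -/
noncomputable def enorm₂ {n : ℕ} (x : Fin n → ℝ) : ℝ := Real.sqrt (∑ i, x i ^ 2)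

/-- `β` is the (Euclidean) operator norm of `H`: the least nonnegative constant `c`
with `‖Hx‖₂ ≤ c ‖x‖₂` for all `x`. -/
def IsOpNorm {n : ℕ} (H : Matrix (Fin n) (Fin n) ℝ) (β : ℝ) : Prop :=
  IsLeast {c : ℝ | 0 ≤ c ∧ ∀ x : Fin n → ℝ, enorm₂ (H.mulVec x) ≤ c * enorm₂ x} β

namespace PhaseIAux

def P (c η : ℝ) : ℕ → ℝ → ℝ
  | 0, _ => -c
  | t+1, l => (1 - η * l) * P c η t l - η

lemma P_zero (c η l : ℝ) : P c η 0 l = -c := rfl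
lemma P_succ (c η l : ℝ) (t : ℕ) : P c η (t+1) l = (1 - η * l) * P c η t l - η := rfl

lemma P_key (c η l : ℝ) : ∀ t : ℕ, l * P c η t l + 1 = (1 - η * l) ^ t * (1 - c * l)
  | 0 => by simp [P_zero]; ring
  | t+1 => by rw [P_succ]; linear_combination (1 - η * l) * P_key c η l t

lemma P_at_zero (c η : ℝ) : ∀ t : ℕ, P c η t 0 = -c - η * t
  | 0 => by simp [P_zero]
  | t+1 => by rw [P_succ, P_at_zero c η t]; push_cast; ring

lemma P_ineq (c η l : ℝ) (hc : 0 < c) (hη : 0 < η) (hl : η * l < 1) (t : ℕ) :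
    P c η t l * (l * P c η t l + 1) ≤ (max (1 - η / c) 0) ^ t * (-c * (1 - c * l)) := by
  set ρ := max (1 - η / c) 0 with hρdef
  have hρ0 : 0 ≤ ρ := le_max_right _ _
  have hρ1 : ρ ≤ 1 := by
    have : 0 < η / c := div_pos hη hc
    exact max_le (by linarith) zero_le_one
  have hρt0 : (0:ℝ) ≤ ρ ^ t := pow_nonneg hρ0 t
  have hρt1 : ρ ^ t ≤ 1 := pow_le_one₀ hρ0 hρ1
  clear_value ρ
  rcases eq_or_ne l 0 with rfl | hl0
  · rw [P_at_zero]
    have ht : (0:ℝ) ≤ η * t := by positivity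
    nlinarith [mul_le_mul_of_nonneg_right hρt1 hc.le]
  · set b := 1 - c * l with hbdef
    set a := 1 - η * l with hadef
    set A := a ^ t with hAdef
    clear_value b a A
    have hq : l * P c η t l = A * b - 1 := by
      rw [hAdef, hadef, hbdef]; linarith [P_key c η l t]
    have hP : P c η t l = (A * b - 1) / l := by
      rw [eq_div_iff hl0]; linarith [hq]
    rw [hq, hP, div_mul_eq_mul_div]
    have hrhs : ρ ^ t * (-c * b) * l = ρ ^ t * (b * (b - 1)) := by
      rw [hbdef]; ring
    clear hq hP
    rcases lt_or_gt_of_ne hl0 with hlneg | hlpos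
    · -- l < 0 : a ≥ 1, b > 1
      have ha1 : 1 ≤ a := by rw [hadef]; nlinarith
      have hA1 : (1:ℝ) ≤ A := by rw [hAdef]; exact one_le_pow₀ ha1
      have hb1 : 1 < b := by rw [hbdef]; nlinarith
      rw [div_le_iff_of_neg hlneg, hrhs]
      have m1 : b ≤ A * b := le_mul_of_one_le_left (by linarith) hA1
      have m2 : (0:ℝ) ≤ (A * b - b) * (A * b + b - 1) :=
        mul_nonneg (by linarith) (by linarith)
      have m3 : ρ ^ t * (b * (b - 1)) ≤ 1 * (b * (b - 1)) :=
        mul_le_mul_of_nonneg_right hρt1 (by nlinarith)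
      nlinarith [m2, m3]
    · -- l > 0 : 0 < a < 1
      have ha0 : 0 < a := by rw [hadef]; linarith
      have ha1 : a < 1 := by rw [hadef]; nlinarith
      have hA0 : 0 < A := by rw [hAdef]; exact pow_pos ha0 t
      have hA1 : A ≤ 1 := by rw [hAdef]; exact pow_le_one₀ ha0.le ha1.le
      have hA2b : A * A * (b * b) ≤ A * (b * b) := by
        nlinarith [mul_nonneg (mul_nonneg (sub_nonneg.2 hA1) hA0.le) (mul_self_nonneg b)]
      rw [div_le_iff₀ hlpos, hrhs]
      rcases le_or_gt 0 b with hb | hb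
      · -- 0 ≤ b ≤ 1
        have hb1 : b ≤ 1 := by rw [hbdef]; nlinarith
        have hρa : ρ ≤ a := by
          rw [hρdef]
          apply max_le _ ha0.le
          have hcl : c * l ≤ 1 := by rw [hbdef] at hb; linarith
          have : η * l ≤ η / c := by rw [le_div_iff₀ hc]; nlinarith
          rw [hadef]; linarith
        have hρtA : ρ ^ t ≤ A := by rw [hAdef]; exact pow_le_pow_left₀ hρ0 hρa t
        have hb2 : (0:ℝ) ≤ b - b * b := by nlinarith [mul_nonneg hb (by linarith : (0:ℝ) ≤ 1 - b)]
        have k1 : ρ ^ t * (b - b * b) ≤ A * (b - b * b) :=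
          mul_le_mul_of_nonneg_right hρtA hb2
        linarith [k1, hA2b]
      · -- b < 0 : c * l > 1
        have hcl : 1 < c * l := by rw [hbdef] at hb; linarith
        have hηc : η < c := by
          have h1 : l < 1 / η := by rw [lt_div_iff₀ hη]; linarith
          have h2 : 1 / c < l := by rw [div_lt_iff₀ hc]; linarith
          have := h2.trans h1
          rw [div_lt_div_iff₀ hc hη] at this; linarith
        have hρpos : 0 < 1 - η / c := by
          have : η / c < 1 := (div_lt_one hc).2 hηc
          linarith
        have haρ : a ≤ ρ := by
          rw [hρdef]
          apply le_max_of_le_left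
          have h2 : 1 / c ≤ l := by rw [div_le_iff₀ hc]; linarith
          have : η / c ≤ η * l := by rw [div_le_iff₀ hc]; nlinarith
          rw [hadef]; linarith
        have hAρ : A ≤ ρ ^ t := by rw [hAdef]; exact pow_le_pow_left₀ ha0.le haρ t
        have hbb : (0:ℝ) ≤ b * (b - 1) :=
          le_of_lt (mul_pos_of_neg_of_neg hb (show b - 1 < 0 by linarith))
        have k1 : A * (b * (b - 1)) ≤ ρ ^ t * (b * (b - 1)) :=
          mul_le_mul_of_nonneg_right hAρ hbb
        linarith [k1, hA2b]

lemma enorm_eq_norm {n : ℕ} (x : EuclideanSpace ℝ (Fin n)) :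
    enorm₂ ((WithLp.equiv 2 _) x) = ‖x‖ := by
  rw [EuclideanSpace.norm_eq, enorm₂]
  congr 1
  exact Finset.sum_congr rfl fun i _ => by
    rw [show (WithLp.equiv 2 (Fin n → ℝ)) x i = x.ofLp i from rfl, Real.norm_eq_abs, sq_abs]

lemma enorm_smul' {n : ℕ} (s : ℝ) (x : Fin n → ℝ) : enorm₂ (s • x) = |s| * enorm₂ x := by
  rw [enorm₂, enorm₂]
  have : ∀ i, (s • x) i ^ 2 = s ^ 2 * x i ^ 2 := fun i => by
    simp [Pi.smul_apply, smul_eq_mul]; ring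
  rw [Finset.sum_congr rfl fun i _ => this i, ← Finset.mul_sum,
    Real.sqrt_mul (sq_nonneg s), Real.sqrt_sq_eq_abs]

end PhaseIAux

open PhaseIAux

/-- (Monotone increasing norm in phase I.) For plain gradient descent
`z_{t+1} = z_t − η (H z_t + g)` with `0 < η < 1/β`, initialized at `z₀ = −α g/‖g‖`
with `0 < α < 1`, `α |gᵀHg| < ‖g‖³`: for every `t`, `z_tᵀ(H z_t + g) ≤ 0`, and
consequently `‖z_{t+1}‖₂ ≥ ‖z_t‖₂`. -/
theorem phaseI_norm_monotone_increasing {n : ℕ}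
    (H : Matrix (Fin n) (Fin n) ℝ) (hH : H.IsSymm) (g : Fin n → ℝ) (hg : g ≠ 0)
    (β : ℝ) (hβ : IsOpNorm H β)
    (η : ℝ) (hη_pos : 0 < η) (hη_lt : η < 1 / β)
    (α : ℝ) (hα_pos : 0 < α) (hα_lt : α < 1)
    (hα_g : α * |g ⬝ᵥ H.mulVec g| < (enorm₂ g) ^ 3)
    (z : ℕ → Fin n → ℝ)
    (hz0 : z 0 = (-(α / enorm₂ g)) • g)
    (hrec : ∀ s, z (s + 1) = z s - η • (H.mulVec (z s) + g)) :
    ∀ t : ℕ, z t ⬝ᵥ (H.mulVec (z t) + g) ≤ 0 ∧ enorm₂ (z t) ≤ enorm₂ (z (t + 1)) := by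
  have hH' : H.IsHermitian := (Matrix.conjTranspose_eq_transpose_of_trivial H).trans hH
  -- basic positivity
  have hG : 0 < enorm₂ g := by
    obtain ⟨i, hi⟩ : ∃ i, g i ≠ 0 := by
      by_contra h; push_neg at h; exact hg (funext h)
    have hsum : 0 < ∑ i, g i ^ 2 :=
      Finset.sum_pos' (fun i _ => sq_nonneg _) ⟨i, Finset.mem_univ i, by positivity⟩
    exact Real.sqrt_pos.2 hsum
  set G := enorm₂ g with hGdef
  set c : ℝ := α / G with hcdef
  have hc : 0 < c := div_pos hα_pos hG
  have hβ0 : 0 ≤ β := hβ.1.1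
  have hβpos : 0 < β := by
    rcases hβ0.lt_or_eq with h | h
    · exact h
    · exfalso; rw [← h] at hη_lt; simp at hη_lt; linarith
  have hηβ : η * β < 1 := by rw [lt_div_iff₀ hβpos] at hη_lt; linarith
  -- spectral setup
  set U : Matrix (Fin n) (Fin n) ℝ := (hH'.eigenvectorUnitary : Matrix (Fin n) (Fin n) ℝ) with hU
  set μ : Fin n → ℝ := hH'.eigenvalues with hμdef
  have h1 : star U * U = 1 := Unitary.coe_star_mul_self hH'.eigenvectorUnitary
  have h2 : U * star U = 1 := (Matrix.mem_unitaryGroup_iff).mp hH'.eigenvectorUnitary.2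
  have hspec : H = U * Matrix.diagonal μ * star U := by
    have := hH'.spectral_theorem
    simpa using this
  have hdiag : ∀ x : Fin n → ℝ, (Matrix.diagonal μ) *ᵥ x = fun i => μ i * x i := by
    intro x; funext i; rw [Matrix.mulVec_diagonal]
  have hmv : ∀ x : Fin n → ℝ, H *ᵥ (U *ᵥ x) = U *ᵥ (fun i => μ i * x i) := by
    intro x
    rw [Matrix.mulVec_mulVec, ← hdiag, hspec, Matrix.mul_assoc, Matrix.mul_assoc,
      h1, Matrix.mul_one, ← Matrix.mulVec_mulVec]
  have hdot : ∀ a b : Fin n → ℝ, (U *ᵥ a) ⬝ᵥ (U *ᵥ b) = a ⬝ᵥ b := by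
    intro a b
    rw [Matrix.dotProduct_mulVec, ← Matrix.mulVec_transpose, Matrix.mulVec_mulVec]
    have hUtU : Uᵀ * U = 1 := by rw [← Matrix.conjTranspose_eq_transpose_of_trivial]; exact h1
    rw [hUtU, Matrix.one_mulVec]
  -- eigenvalue bound
  have hμ : ∀ i, η * μ i < 1 := by
    intro i
    have hb1 := hβ.1.2 ((WithLp.equiv 2 _) (hH'.eigenvectorBasis i))
    change enorm₂ (H *ᵥ ⇑(hH'.eigenvectorBasis i)) ≤ _ at hb1
    rw [hH'.mulVec_eigenvectorBasis] at hb1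
    change enorm₂ (hH'.eigenvalues i • (WithLp.equiv 2 _) (hH'.eigenvectorBasis i)) ≤ _ at hb1
    have hv1 : enorm₂ ((WithLp.equiv 2 _) (hH'.eigenvectorBasis i)) = 1 := by
      rw [enorm_eq_norm]
      exact hH'.eigenvectorBasis.orthonormal.1 i
    rw [show (hH'.eigenvalues i • (WithLp.equiv 2 _) (hH'.eigenvectorBasis i) : Fin n → ℝ) =
      hH'.eigenvalues i • ((WithLp.equiv 2 _) (hH'.eigenvectorBasis i) : Fin n → ℝ) from rfl,
      enorm_smul', hv1] at hb1
    have habs : |μ i| ≤ β := by rw [hμdef]; simpa using hb1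
    have : η * μ i ≤ η * |μ i| := mul_le_mul_of_nonneg_left (le_abs_self _) hη_pos.le
    have : η * |μ i| ≤ η * β := mul_le_mul_of_nonneg_left habs hη_pos.le
    calc η * μ i ≤ η * |μ i| := mul_le_mul_of_nonneg_left (le_abs_self _) hη_pos.le
      _ ≤ η * β := this
      _ < 1 := hηβ
  -- coordinates
  set gv : Fin n → ℝ := (star U) *ᵥ g with hgv
  have hgU : U *ᵥ gv = g := by
    rw [hgv, Matrix.mulVec_mulVec, h2, Matrix.one_mulVec]
  set w : ℕ → Fin n → ℝ := fun t i => P c η t (μ i) * gv i with hwdef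
  have hz : ∀ t, z t = U *ᵥ w t := by
    intro t
    induction t with
    | zero =>
      calc z 0 = (-c) • (U *ᵥ gv) := by rw [hz0, hgU]
        _ = U *ᵥ ((-c) • gv) := by rw [Matrix.mulVec_smul]
        _ = U *ᵥ w 0 := by
            have hfun : (-c) • gv = w 0 := by
              funext i
              simp only [hwdef, Pi.smul_apply, smul_eq_mul, P_zero]
            rw [hfun]
    | succ t ih =>
      calc z (t+1) = z t - η • (H *ᵥ z t + g) := hrec t
        _ = U *ᵥ w t - η • (U *ᵥ (fun i => μ i * w t i) + U *ᵥ gv) := by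
            rw [ih, hmv, hgU]
        _ = U *ᵥ (w t - η • ((fun i => μ i * w t i) + gv)) := by
            rw [Matrix.mulVec_sub, Matrix.mulVec_smul, Matrix.mulVec_add]
        _ = U *ᵥ w (t+1) := by
            have hfun : w t - η • ((fun i => μ i * w t i) + gv) = w (t+1) := by
              funext i
              simp only [hwdef, Pi.sub_apply, Pi.smul_apply, Pi.add_apply, smul_eq_mul, P_succ]
              ring
            rw [hfun]
  have hu : ∀ t, z t ⬝ᵥ (H *ᵥ z t + g) =
      ∑ i, gv i ^ 2 * (P c η t (μ i) * (μ i * P c η t (μ i) + 1)) := by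
    intro t
    calc z t ⬝ᵥ (H *ᵥ z t + g)
        = (U *ᵥ w t) ⬝ᵥ (U *ᵥ (fun i => μ i * w t i) + U *ᵥ gv) := by rw [hz t, hmv, hgU]
      _ = (U *ᵥ w t) ⬝ᵥ (U *ᵥ ((fun i => μ i * w t i) + gv)) := by rw [Matrix.mulVec_add]
      _ = w t ⬝ᵥ ((fun i => μ i * w t i) + gv) := hdot _ _
      _ = ∑ i, gv i ^ 2 * (P c η t (μ i) * (μ i * P c η t (μ i) + 1)) := by
          simp only [dotProduct, Pi.add_apply, hwdef]
          exact Finset.sum_congr rfl fun i _ => by ring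
  -- base case nonpositivity
  have h0 : z 0 ⬝ᵥ (H *ᵥ z 0 + g) ≤ 0 := by
    rw [hz0]
    have hgg : g ⬝ᵥ g = G ^ 2 := by
      rw [hGdef, enorm₂, Real.sq_sqrt (by positivity)]
      simp [dotProduct, sq]
    have hXle : α * (g ⬝ᵥ (H *ᵥ g)) < G ^ 3 :=
      lt_of_le_of_lt (by nlinarith [le_abs_self (g ⬝ᵥ (H *ᵥ g))]) hα_g
    have hsimp : ((-(α / G)) • g) ⬝ᵥ (H *ᵥ ((-(α / G)) • g) + g) =
        c * c * (g ⬝ᵥ (H *ᵥ g)) - c * (g ⬝ᵥ g) := by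
      rw [Matrix.mulVec_smul]
      simp only [smul_dotProduct, dotProduct_add, dotProduct_smul,
        smul_eq_mul, hcdef]
      ring
    rw [hsimp, hgg]
    have hcX : c * (g ⬝ᵥ (H *ᵥ g)) ≤ G ^ 2 := by
      rw [hcdef, div_mul_eq_mul_div, div_le_iff₀ hG]
      calc α * (g ⬝ᵥ (H *ᵥ g)) ≤ G ^ 3 := hXle.le
        _ = G ^ 2 * G := by ring
    nlinarith [mul_le_mul_of_nonneg_left hcX hc.le]
  -- the sum at time 0 is ≤ 0
  have hS : ∑ i, gv i ^ 2 * (P c η 0 (μ i) * (μ i * P c η 0 (μ i) + 1)) ≤ 0 := by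
    rw [← hu 0]; exact h0
  -- main nonpositivity for all t
  have hmain : ∀ t, z t ⬝ᵥ (H *ᵥ z t + g) ≤ 0 := by
    intro t
    rw [hu t]
    set ρ := max (1 - η / c) 0 with hρdef
    have hρ0 : (0:ℝ) ≤ ρ ^ t := pow_nonneg (le_max_right _ _) t
    calc ∑ i, gv i ^ 2 * (P c η t (μ i) * (μ i * P c η t (μ i) + 1))
        ≤ ∑ i, gv i ^ 2 * (ρ ^ t * (-c * (1 - c * μ i))) := by
          apply Finset.sum_le_sum
          intro i _
          exact mul_le_mul_of_nonneg_left (P_ineq c η (μ i) hc hη_pos (hμ i) t) (sq_nonneg _)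
      _ = ρ ^ t * ∑ i, gv i ^ 2 * (P c η 0 (μ i) * (μ i * P c η 0 (μ i) + 1)) := by
          rw [Finset.mul_sum]
          exact Finset.sum_congr rfl fun i _ => by rw [P_zero]; ring
      _ ≤ 0 := mul_nonpos_of_nonneg_of_nonpos hρ0 hS
  -- conclusion
  intro t
  refine ⟨hmain t, ?_⟩
  rw [hrec t]
  set r : Fin n → ℝ := H *ᵥ z t + g with hr
  have hzr : z t ⬝ᵥ r ≤ 0 := hmain t
  rw [enorm₂, enorm₂]
  apply Real.sqrt_le_sqrt
  have hexp : ∀ i, (z t - η • r) i ^ 2 =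
      z t i ^ 2 - 2 * η * (z t i * r i) + η ^ 2 * r i ^ 2 := by
    intro i
    simp only [Pi.sub_apply, Pi.smul_apply, smul_eq_mul]
    ring
  rw [Finset.sum_congr rfl fun i _ => hexp i]
  rw [Finset.sum_add_distrib, Finset.sum_sub_distrib, ← Finset.mul_sum, ← Finset.mul_sum]
  have hdotr : ∑ i, z t i * r i = z t ⬝ᵥ r := rfl
  have hr2 : (0:ℝ) ≤ ∑ i, r i ^ 2 := Finset.sum_nonneg fun i _ => sq_nonneg _
  rw [hdotr]
  nlinarith [mul_nonneg (sq_nonneg η) hr2]
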